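/- Let T be the final-size map built from positive parameters βᵢⱼ, γᵢ, μᵢ and initial data S₁₀, S₂₀ > 0, I₁₀, I₂₀ ≥ 0, R₁₀, R₂₀ ≥ 0 with I₁₀ + I₂₀ > 0. Then the iterates Tⁿ(0,0) form a componentwise increasing sequence and the iterates Tⁿ(S₁₀,S₂₀) form a componentwise decreasing sequence, with Tⁿ(0,0) ≤ Tⁿ(S₁₀,S₂₀) componentwise for all n; the limits S⁻ = lim_{n→∞} Tⁿ(0,0) and S⁺ = lim_{n→∞} Tⁿ(S₁₀,S₂₀) exist, satisfy 0 ≪ S⁻ ≤ S⁺ ≪ (S₁₀,S₂₀) (where ≪ means strict inequality in both components and ≤ means componentwise inequality), and are fixed points of T: T(S⁻) = S⁻ and T(S⁺) = S⁺. -/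
import Mathlib

open Filter

noncomputable def Tmap (β11 β12 β21 β22 μ1 μ2 S10 S20 ε1 ε2 Z1 Z2 N10 N20 : ℝ) :
    ℝ × ℝ → ℝ × ℝ := fun X =>
  (S10 * ((ε1 * X.1 + Z1) / N10) ^ (β11 / μ1) * ((ε2 * X.2 + Z2) / N20) ^ (β12 / μ2),
   S20 * ((ε1 * X.1 + Z1) / N10) ^ (β21 / μ1) * ((ε2 * X.2 + Z2) / N20) ^ (β22 / μ2))

theorem stmt_9
    (β11 β12 β21 β22 γ1 γ2 μ1 μ2 : ℝ)
    (hβ11 : 0 < β11) (hβ12 : 0 < β12) (hβ21 : 0 < β21) (hβ22 : 0 < β22)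
    (hγ1 : 0 < γ1) (hγ2 : 0 < γ2) (hμ1 : 0 < μ1) (hμ2 : 0 < μ2)
    (S10 S20 I10 I20 R10 R20 : ℝ)
    (hS10 : 0 < S10) (hS20 : 0 < S20)
    (hI10 : 0 ≤ I10) (hI20 : 0 ≤ I20)
    (hR10 : 0 ≤ R10) (hR20 : 0 ≤ R20)
    (ε1 ε2 Z1 Z2 N10 N20 : ℝ)
    (hN10 : N10 = S10 + I10 + R10) (hN20 : N20 = S20 + I20 + R20)
    (hε1 : ε1 = μ1 / (γ1 + μ1)) (hε2 : ε2 = μ2 / (γ2 + μ2))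
    (hZ1 : Z1 = (1 - ε1) * N10 + ε1 * R10) (hZ2 : Z2 = (1 - ε2) * N20 + ε2 * R20)
    (hI0 : 0 < I10 + I20)
    (T : ℝ × ℝ → ℝ × ℝ)
    (hT : T = Tmap β11 β12 β21 β22 μ1 μ2 S10 S20 ε1 ε2 Z1 Z2 N10 N20)
    :
    (∀ n : ℕ, (T^[n] (0, 0)).1 < (T^[n+1] (0, 0)).1 ∧ (T^[n] (0, 0)).2 < (T^[n+1] (0, 0)).2) ∧
    (∀ n : ℕ, (T^[n+1] (S10, S20)).1 < (T^[n] (S10, S20)).1 ∧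
      (T^[n+1] (S10, S20)).2 < (T^[n] (S10, S20)).2) ∧
    (∀ n : ℕ, (T^[n] (0, 0)).1 ≤ (T^[n] (S10, S20)).1 ∧ (T^[n] (0, 0)).2 ≤ (T^[n] (S10, S20)).2) ∧
    ∃ Sm Sp : ℝ × ℝ,
      Tendsto (fun n => T^[n] (0, 0)) atTop (nhds Sm) ∧
      Tendsto (fun n => T^[n] (S10, S20)) atTop (nhds Sp) ∧
      (0 < Sm.1 ∧ 0 < Sm.2) ∧ (Sm.1 ≤ Sp.1 ∧ Sm.2 ≤ Sp.2) ∧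
      (Sp.1 < S10 ∧ Sp.2 < S20) ∧ T Sm = Sm ∧ T Sp = Sp := by
  have hN10pos : 0 < N10 := by rw [hN10]; linarith
  have hN20pos : 0 < N20 := by rw [hN20]; linarith
  have hε1pos : 0 < ε1 := by rw [hε1]; positivity
  have hε2pos : 0 < ε2 := by rw [hε2]; positivity
  have hε1lt : ε1 < 1 := by
    rw [hε1, div_lt_one (by linarith)]; linarith
  have hε2lt : ε2 < 1 := by
    rw [hε2, div_lt_one (by linarith)]; linarith
  have hZ1pos : 0 < Z1 := by
    rw [hZ1]; nlinarith [mul_pos (sub_pos.2 hε1lt) hN10pos, mul_nonneg hε1pos.le hR10]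
  have hZ2pos : 0 < Z2 := by
    rw [hZ2]; nlinarith [mul_pos (sub_pos.2 hε2lt) hN20pos, mul_nonneg hε2pos.le hR20]
  have hkey1 : ε1 * S10 + Z1 = N10 - ε1 * I10 := by rw [hZ1, hN10]; ring
  have hkey2 : ε2 * S20 + Z2 = N20 - ε2 * I20 := by rw [hZ2, hN20]; ring
  -- positivity of T
  have hTpos : ∀ x : ℝ × ℝ, 0 ≤ x.1 → 0 ≤ x.2 → 0 < (T x).1 ∧ 0 < (T x).2 := by
    intro x h1 h2
    rw [hT]
    constructor <;> · simp only [Tmap]; positivity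
  -- monotonicity
  have hTmono : ∀ x y : ℝ × ℝ, 0 ≤ x.1 → 0 ≤ x.2 → x.1 ≤ y.1 → x.2 ≤ y.2 →
      (T x).1 ≤ (T y).1 ∧ (T x).2 ≤ (T y).2 := by
    intro x y hx1 hx2 h1 h2
    have hy1 : 0 ≤ y.1 := hx1.trans h1
    have hy2 : 0 ≤ y.2 := hx2.trans h2
    rw [hT]
    constructor <;> · simp only [Tmap]; gcongr <;> positivity
  have hTsmono : ∀ x y : ℝ × ℝ, 0 ≤ x.1 → 0 ≤ x.2 → x.1 < y.1 → x.2 < y.2 →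
      (T x).1 < (T y).1 ∧ (T x).2 < (T y).2 := by
    intro x y hx1 hx2 h1 h2
    have hy1 : 0 ≤ y.1 := hx1.trans h1.le
    have hy2 : 0 ≤ y.2 := hx2.trans h2.le
    rw [hT]
    constructor <;> · simp only [Tmap]; gcongr <;> positivity
  -- strict upper bound at (S10, S20)
  have hTS : (T (S10, S20)).1 < S10 ∧ (T (S10, S20)).2 < S20 := by
    have hr1 : (ε1 * S10 + Z1) / N10 ≤ 1 := by
      rw [div_le_one hN10pos, hkey1]
      have := mul_nonneg hε1pos.le hI10; linarith
    have hr2 : (ε2 * S20 + Z2) / N20 ≤ 1 := by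
      rw [div_le_one hN20pos, hkey2]
      have := mul_nonneg hε2pos.le hI20; linarith
    have hr1pos : 0 < (ε1 * S10 + Z1) / N10 := by positivity
    have hr2pos : 0 < (ε2 * S20 + Z2) / N20 := by positivity
    have hone : (ε1 * S10 + Z1) / N10 < 1 ∨ (ε2 * S20 + Z2) / N20 < 1 := by
      rcases lt_or_ge 0 I10 with h | h
      · left; rw [div_lt_one hN10pos, hkey1]
        have := mul_pos hε1pos h; linarith
      · right
        have hI20pos : 0 < I20 := by linarith
        rw [div_lt_one hN20pos, hkey2]
        have := mul_pos hε2pos hI20pos; linarith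
    have key : ∀ e1 e2 : ℝ, 0 < e1 → 0 < e2 →
        ((ε1 * S10 + Z1) / N10) ^ e1 * ((ε2 * S20 + Z2) / N20) ^ e2 < 1 := by
      intro e1 e2 he1 he2
      have p1 : 0 < ((ε1 * S10 + Z1) / N10) ^ e1 := Real.rpow_pos_of_pos hr1pos _
      have p2 : 0 < ((ε2 * S20 + Z2) / N20) ^ e2 := Real.rpow_pos_of_pos hr2pos _
      have q1 : ((ε1 * S10 + Z1) / N10) ^ e1 ≤ 1 := Real.rpow_le_one hr1pos.le hr1 he1.le
      have q2 : ((ε2 * S20 + Z2) / N20) ^ e2 ≤ 1 := Real.rpow_le_one hr2pos.le hr2 he2.le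
      rcases hone with h | h
      · have hlt : ((ε1 * S10 + Z1) / N10) ^ e1 < 1 :=
          Real.rpow_lt_one hr1pos.le h he1
        have : ((ε1 * S10 + Z1) / N10) ^ e1 * ((ε2 * S20 + Z2) / N20) ^ e2 ≤
            ((ε1 * S10 + Z1) / N10) ^ e1 := mul_le_of_le_one_right p1.le q2
        linarith
      · have hlt : ((ε2 * S20 + Z2) / N20) ^ e2 < 1 :=
          Real.rpow_lt_one hr2pos.le h he2
        have : ((ε1 * S10 + Z1) / N10) ^ e1 * ((ε2 * S20 + Z2) / N20) ^ e2 ≤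
            ((ε2 * S20 + Z2) / N20) ^ e2 := mul_le_of_le_one_left p2.le q1
        linarith
    rw [hT]
    constructor
    · simp only [Tmap]
      have hk := key (β11 / μ1) (β12 / μ2) (by positivity) (by positivity)
      calc S10 * ((ε1 * S10 + Z1) / N10) ^ (β11 / μ1) * ((ε2 * S20 + Z2) / N20) ^ (β12 / μ2)
          = S10 * (((ε1 * S10 + Z1) / N10) ^ (β11 / μ1) *
            ((ε2 * S20 + Z2) / N20) ^ (β12 / μ2)) := mul_assoc _ _ _
        _ < S10 * 1 := mul_lt_mul_of_pos_left hk hS10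
        _ = S10 := mul_one _
    · simp only [Tmap]
      have hk := key (β21 / μ1) (β22 / μ2) (by positivity) (by positivity)
      calc S20 * ((ε1 * S10 + Z1) / N10) ^ (β21 / μ1) * ((ε2 * S20 + Z2) / N20) ^ (β22 / μ2)
          = S20 * (((ε1 * S10 + Z1) / N10) ^ (β21 / μ1) *
            ((ε2 * S20 + Z2) / N20) ^ (β22 / μ2)) := mul_assoc _ _ _
        _ < S20 * 1 := mul_lt_mul_of_pos_left hk hS20
        _ = S20 := mul_one _
  -- sequences
  set a : ℕ → ℝ × ℝ := fun n => T^[n] (0, 0) with ha_def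
  set b : ℕ → ℝ × ℝ := fun n => T^[n] (S10, S20) with hb_def
  have ha_succ : ∀ n, a (n + 1) = T (a n) := fun n => Function.iterate_succ_apply' T n _
  have hb_succ : ∀ n, b (n + 1) = T (b n) := fun n => Function.iterate_succ_apply' T n _
  have ha0 : a 0 = (0, 0) := rfl
  have hb0 : b 0 = (S10, S20) := rfl
  have ha_nonneg : ∀ n, 0 ≤ (a n).1 ∧ 0 ≤ (a n).2 := by
    intro n
    induction n with
    | zero => simp [ha0]
    | succ n ih =>
      rw [ha_succ]
      exact ⟨(hTpos _ ih.1 ih.2).1.le, (hTpos _ ih.1 ih.2).2.le⟩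
  have hb_nonneg : ∀ n, 0 ≤ (b n).1 ∧ 0 ≤ (b n).2 := by
    intro n
    induction n with
    | zero => exact ⟨hS10.le, hS20.le⟩
    | succ n ih =>
      rw [hb_succ]
      exact ⟨(hTpos _ ih.1 ih.2).1.le, (hTpos _ ih.1 ih.2).2.le⟩
  have ha_inc : ∀ n, (a n).1 < (a (n + 1)).1 ∧ (a n).2 < (a (n + 1)).2 := by
    intro n
    induction n with
    | zero =>
      rw [ha_succ, ha0]
      exact hTpos (0, 0) le_rfl le_rfl
    | succ n ih =>
      rw [ha_succ n] at ih
      rw [ha_succ (n + 1), ha_succ n]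
      exact hTsmono _ _ (ha_nonneg n).1 (ha_nonneg n).2 ih.1 ih.2
  have hb_dec : ∀ n, (b (n + 1)).1 < (b n).1 ∧ (b (n + 1)).2 < (b n).2 := by
    intro n
    induction n with
    | zero => rw [hb_succ, hb0]; exact hTS
    | succ n ih =>
      have hn := hb_nonneg (n + 1)
      rw [hb_succ n] at ih hn
      rw [hb_succ (n + 1), hb_succ n]
      exact hTsmono _ _ hn.1 hn.2 ih.1 ih.2
  have hab : ∀ n, (a n).1 ≤ (b n).1 ∧ (a n).2 ≤ (b n).2 := by
    intro n
    induction n with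
    | zero => exact ⟨hS10.le, hS20.le⟩
    | succ n ih =>
      rw [ha_succ, hb_succ]
      exact hTmono _ _ (ha_nonneg n).1 (ha_nonneg n).2 ih.1 ih.2
  refine ⟨ha_inc, hb_dec, hab, ?_⟩
  -- bounds
  have hb_anti1 : Antitone fun n => (b n).1 := antitone_nat_of_succ_le fun n => (hb_dec n).1.le
  have hb_anti2 : Antitone fun n => (b n).2 := antitone_nat_of_succ_le fun n => (hb_dec n).2.le
  have ha_mono1 : Monotone fun n => (a n).1 := monotone_nat_of_le_succ fun n => (ha_inc n).1.le
  have ha_mono2 : Monotone fun n => (a n).2 := monotone_nat_of_le_succ fun n => (ha_inc n).2.le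
  have ha_ub1 : ∀ n, (a n).1 ≤ S10 := fun n => (hab n).1.trans (hb_anti1 (Nat.zero_le n))
  have ha_ub2 : ∀ n, (a n).2 ≤ S20 := fun n => (hab n).2.trans (hb_anti2 (Nat.zero_le n))
  have hbdd1 : BddAbove (Set.range fun n => (a n).1) := ⟨S10, Set.forall_mem_range.2 ha_ub1⟩
  have hbdd2 : BddAbove (Set.range fun n => (a n).2) := ⟨S20, Set.forall_mem_range.2 ha_ub2⟩
  have hbddb1 : BddBelow (Set.range fun n => (b n).1) :=
    ⟨0, Set.forall_mem_range.2 fun n => (hb_nonneg n).1⟩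
  have hbddb2 : BddBelow (Set.range fun n => (b n).2) :=
    ⟨0, Set.forall_mem_range.2 fun n => (hb_nonneg n).2⟩
  set Sm : ℝ × ℝ := (⨆ n, (a n).1, ⨆ n, (a n).2) with hSm_def
  set Sp : ℝ × ℝ := (⨅ n, (b n).1, ⨅ n, (b n).2) with hSp_def
  have hta1 : Tendsto (fun n => (a n).1) atTop (nhds Sm.1) := tendsto_atTop_ciSup ha_mono1 hbdd1
  have hta2 : Tendsto (fun n => (a n).2) atTop (nhds Sm.2) := tendsto_atTop_ciSup ha_mono2 hbdd2
  have htb1 : Tendsto (fun n => (b n).1) atTop (nhds Sp.1) := tendsto_atTop_ciInf hb_anti1 hbddb1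
  have htb2 : Tendsto (fun n => (b n).2) atTop (nhds Sp.2) := tendsto_atTop_ciInf hb_anti2 hbddb2
  have hta : Tendsto a atTop (nhds Sm) := by
    have := hta1.prodMk_nhds hta2
    simpa using this
  have htb : Tendsto b atTop (nhds Sp) := by
    have := htb1.prodMk_nhds htb2
    simpa using this
  -- positivity of Sm
  have ha1pos : 0 < (a 1).1 ∧ 0 < (a 1).2 := by
    have := ha_inc 0
    rw [ha0] at this
    exact ⟨this.1, this.2⟩
  have hSm1pos : 0 < Sm.1 := ha1pos.1.trans_le (le_ciSup hbdd1 1)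
  have hSm2pos : 0 < Sm.2 := ha1pos.2.trans_le (le_ciSup hbdd2 1)
  -- Sm ≤ Sp
  have hSmSp1 : Sm.1 ≤ Sp.1 :=
    le_of_tendsto_of_tendsto' hta1 htb1 fun n => (hab n).1
  have hSmSp2 : Sm.2 ≤ Sp.2 :=
    le_of_tendsto_of_tendsto' hta2 htb2 fun n => (hab n).2
  -- Sp < S0
  have hSp1lt : Sp.1 < S10 := by
    have h1 : Sp.1 ≤ (b 1).1 := ciInf_le hbddb1 1
    have h2 : (b 1).1 < (b 0).1 := (hb_dec 0).1
    rw [hb0] at h2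
    linarith
  have hSp2lt : Sp.2 < S20 := by
    have h1 : Sp.2 ≤ (b 1).2 := ciInf_le hbddb2 1
    have h2 : (b 1).2 < (b 0).2 := (hb_dec 0).2
    rw [hb0] at h2
    linarith
  -- continuity of T at positive points
  have hTcont : ∀ x : ℝ × ℝ, 0 < x.1 → 0 < x.2 → ContinuousAt T x := by
    intro x h1 h2
    rw [hT]
    have hc1 : ContinuousAt (fun X : ℝ × ℝ => (ε1 * X.1 + Z1) / N10) x := by fun_prop
    have hc2 : ContinuousAt (fun X : ℝ × ℝ => (ε2 * X.2 + Z2) / N20) x := by fun_prop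
    have hb1 : (ε1 * x.1 + Z1) / N10 ≠ 0 := by positivity
    have hb2 : (ε2 * x.2 + Z2) / N20 ≠ 0 := by positivity
    apply ContinuousAt.prodMk
    · exact (continuousAt_const.mul (hc1.rpow_const (Or.inl hb1))).mul
        (hc2.rpow_const (Or.inl hb2))
    · exact (continuousAt_const.mul (hc1.rpow_const (Or.inl hb1))).mul
        (hc2.rpow_const (Or.inl hb2))
  have hSp1pos : 0 < Sp.1 := hSm1pos.trans_le hSmSp1
  have hSp2pos : 0 < Sp.2 := hSm2pos.trans_le hSmSp2
  have hfixa : T Sm = Sm := by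
    have h1 : Tendsto (fun n => a (n + 1)) atTop (nhds Sm) :=
      hta.comp (tendsto_add_atTop_nat 1)
    have h2 : Tendsto (fun n => T (a n)) atTop (nhds (T Sm)) :=
      ((hTcont Sm hSm1pos hSm2pos).tendsto).comp hta
    have h3 : (fun n => a (n + 1)) = fun n => T (a n) := funext ha_succ
    rw [h3] at h1
    exact tendsto_nhds_unique h2 h1
  have hfixb : T Sp = Sp := by
    have h1 : Tendsto (fun n => b (n + 1)) atTop (nhds Sp) :=
      htb.comp (tendsto_add_atTop_nat 1)
    have h2 : Tendsto (fun n => T (b n)) atTop (nhds (T Sp)) :=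
      ((hTcont Sp hSp1pos hSp2pos).tendsto).comp htb
    have h3 : (fun n => b (n + 1)) = fun n => T (b n) := funext hb_succ
    rw [h3] at h1
    exact tendsto_nhds_unique h2 h1
  exact ⟨Sm, Sp, hta, htb, ⟨hSm1pos, hSm2pos⟩, ⟨hSmSp1, hSmSp2⟩, ⟨hSp1lt, hSp2lt⟩, hfixa, hfixb⟩
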